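/- Let A be a commutative real associative algebra and let p be a seminorm on A satisfying the square property p(a²) = p(a)² for all a ∈ A. Then p is submultiplicative: p(ab) ≤ p(a)·p(b) for all a, b ∈ A. -/

import Mathlib

/-- A seminorm with square property on a commutative real associative algebra is
submultiplicative. -/
theorem seminorm_square_property_submultiplicative_comm
    {A : Type*} [NonUnitalCommRing A] [Module ℝ A]
    [SMulCommClass ℝ A A] [IsScalarTower ℝ A A]
    (p : A → ℝ)
    (hnonneg : ∀ a, 0 ≤ p a)
    (htriangle : ∀ a b, p (a + b) ≤ p a + p b)
    (hhomog : ∀ (k : ℝ) (a : A), p (k • a) = |k| * p a)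
    (hsq : ∀ a, p (a * a) = (p a) ^ 2) :
    ∀ a b, p (a * b) ≤ p a * p b := by
  have hneg : ∀ x : A, p (-x) = p x := by
    intro x
    have h := hhomog (-1) x
    simpa using h
  have hsubtri : ∀ x y : A, p (x - y) ≤ p x + p y := by
    intro x y
    calc p (x - y) = p (x + -y) := by rw [sub_eq_add_neg]
    _ ≤ p x + p (-y) := htriangle _ _
    _ = p x + p y := by rw [hneg]
  -- polarization bound
  have hkey : ∀ x y : A, p (x * y) ≤ (p x + p y) ^ 2 / 2 := by
    intro x y
    have hid : x * y = (4⁻¹ : ℝ) • ((x + y) * (x + y) - (x - y) * (x - y)) := by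
      have h4 : (4 : ℝ) • (x * y) = x * y + x * y + x * y + x * y := by
        rw [show (4 : ℝ) = ((4 : ℕ) : ℝ) by norm_num, Nat.cast_smul_eq_nsmul]
        simp [succ_nsmul, add_assoc]
      have hexp : (x + y) * (x + y) - (x - y) * (x - y)
          = x * y + x * y + x * y + x * y := by
        simp only [mul_add, add_mul, mul_sub, sub_mul]
        rw [mul_comm y x]
        abel
      rw [hexp, ← h4, ← smul_assoc]
      norm_num
    have h1 : p (x * y) = 4⁻¹ * p ((x + y) * (x + y) - (x - y) * (x - y)) := by
      rw [hid, hhomog]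
      norm_num
    have h2 : p ((x + y) * (x + y) - (x - y) * (x - y))
        ≤ p (x + y) ^ 2 + p (x - y) ^ 2 := by
      calc p ((x + y) * (x + y) - (x - y) * (x - y))
          ≤ p ((x + y) * (x + y)) + p ((x - y) * (x - y)) := hsubtri _ _
        _ = p (x + y) ^ 2 + p (x - y) ^ 2 := by rw [hsq, hsq]
    have h3 : p (x + y) ^ 2 ≤ (p x + p y) ^ 2 :=
      pow_le_pow_left₀ (hnonneg _) (htriangle x y) 2
    have h4 : p (x - y) ^ 2 ≤ (p x + p y) ^ 2 :=
      pow_le_pow_left₀ (hnonneg _) (hsubtri x y) 2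
    rw [h1]
    linarith
  -- iterated squaring
  set s : A → A := fun x => x * x with hs
  have hiterp : ∀ (n : ℕ) (x : A), p (s^[n] x) = p x ^ 2 ^ n := by
    intro n
    induction n with
    | zero => intro x; simp
    | succ n ih =>
      intro x
      rw [Function.iterate_succ_apply']
      show p (s^[n] x * s^[n] x) = _
      rw [hsq, ih, ← pow_mul, pow_succ]
  have hitermul : ∀ (n : ℕ) (a b : A), s^[n] (a * b) = s^[n] a * s^[n] b := by
    intro n
    induction n with
    | zero => intro a b; simp
    | succ n ih =>
      intro a b
      rw [Function.iterate_succ_apply', Function.iterate_succ_apply',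
        Function.iterate_succ_apply', ih]
      show (s^[n] a * s^[n] b) * (s^[n] a * s^[n] b)
          = (s^[n] a * s^[n] a) * (s^[n] b * s^[n] b)
      exact mul_mul_mul_comm _ _ _ _
  -- normalized case
  have hnorm : ∀ a b : A, p a ≤ 1 → p b ≤ 1 → p (a * b) ≤ 1 := by
    intro a b ha hb
    by_contra h
    push_neg at h
    obtain ⟨n, hn⟩ := pow_unbounded_of_one_lt (2 : ℝ) h
    have hle : p (a * b) ^ n ≤ p (a * b) ^ 2 ^ n :=
      pow_le_pow_right₀ h.le (Nat.lt_two_pow_self (n := n)).le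
    have hbound : p (a * b) ^ 2 ^ n ≤ 2 := by
      have e1 : p (a * b) ^ 2 ^ n = p (s^[n] a * s^[n] b) := by
        rw [← hitermul, hiterp]
      have e2 : p (s^[n] a * s^[n] b) ≤ (p (s^[n] a) + p (s^[n] b)) ^ 2 / 2 :=
        hkey _ _
      have e3 : p (s^[n] a) ≤ 1 := by
        rw [hiterp]; exact pow_le_one₀ (hnonneg a) ha
      have e4 : p (s^[n] b) ≤ 1 := by
        rw [hiterp]; exact pow_le_one₀ (hnonneg b) hb
      have e5 : (p (s^[n] a) + p (s^[n] b)) ^ 2 / 2 ≤ 2 := by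
        have h1 : p (s^[n] a) + p (s^[n] b) ≤ 2 := by linarith
        have h2 : (p (s^[n] a) + p (s^[n] b)) ^ 2 ≤ 2 ^ 2 :=
          pow_le_pow_left₀ (add_nonneg (hnonneg _) (hnonneg _)) h1 2
        linarith
      linarith [e1 ▸ e2, e5]
    linarith
  -- zero case
  have hzero : ∀ x y : A, p x = 0 → p (x * y) = 0 := by
    intro x y hx
    by_contra h
    have hc : 0 < p (x * y) := lt_of_le_of_ne (hnonneg _) (Ne.symm h)
    set t : ℝ := (p y) ^ 2 / p (x * y) + 1 with htdef
    have ht : 0 < t := by positivity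
    have h1 : p ((t • x) * y) ≤ (p (t • x) + p y) ^ 2 / 2 := hkey _ _
    rw [smul_mul_assoc, hhomog, hhomog, hx, mul_zero, zero_add,
      abs_of_pos ht] at h1
    -- h1 : t * c ≤ (p y)^2 / 2
    have htc : t * p (x * y) = (p y) ^ 2 + p (x * y) := by
      rw [htdef, add_mul, div_mul_cancel₀ _ hc.ne', one_mul]
    rw [htc] at h1
    nlinarith [sq_nonneg (p y)]
  -- main
  intro a b
  rcases eq_or_lt_of_le (hnonneg a) with ha | ha
  · rw [hzero a b ha.symm, ← ha]
    simp [mul_nonneg, hnonneg]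
  rcases eq_or_lt_of_le (hnonneg b) with hb | hb
  · rw [mul_comm a b, hzero b a hb.symm, ← hb]
    simp
  have h1 : p (((p a)⁻¹ • a) * ((p b)⁻¹ • b)) ≤ 1 := by
    apply hnorm
    · rw [hhomog, abs_of_pos (by positivity), inv_mul_cancel₀ ha.ne']
    · rw [hhomog, abs_of_pos (by positivity), inv_mul_cancel₀ hb.ne']
  rw [smul_mul_assoc, mul_smul_comm, smul_smul, hhomog,
    abs_of_pos (by positivity)] at h1
  have h2 : (p a)⁻¹ * (p b)⁻¹ * p (a * b) ≤ 1 := h1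
  have h3 : 0 < p a * p b := by positivity
  rw [show (p a)⁻¹ * (p b)⁻¹ = (p a * p b)⁻¹ by rw [mul_inv],
    inv_mul_le_iff₀ h3, mul_one] at h2
  exact h2
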